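/- Let T ∈ ℕ and for t, s ∈ {0,…,T} let ρ_t, c_t, w^p_t, w^c_t ∈ ℝ^L, and set ρ*_t = ρ_t − w^p_t and c*_t = c_t − w^c_t. Let ξ_{t,s} ∈ ℝ and define the slackness ε*_{t,s} = ξ_{t,s} − ρ*_tᵀ(c*_t − c*_s). Define α^p = max_t ‖w^p_t‖, α^c = max_t ‖w^c_t‖, β^p = max_t ‖ρ_t‖, and β^c = max_t ‖c_t‖ (Euclidean norms). If ε*_{t,s} ≥ 6 max{α^p β^c, α^c β^p, α^p α^c} for all t, s ∈ {0,…,T}, then ξ_{t,s} ≥ ρ_tᵀ(c_t − c_s) for all t, s ∈ {0,…,T}. -/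

import Mathlib

open MeasureTheory Filter Topology Finset

noncomputable section

/-- Vectors in ℝ^L with the Euclidean norm. -/
abbrev Vec (L : ℕ) := EuclideanSpace ℝ (Fin L)

/-- Inner product (dot product) of two vectors. -/
def dotp {L : ℕ} (p c : Vec L) : ℝ := ∑ j, p j * c j

/-- Componentwise nonnegative vectors: the set ℝ^L_+. -/
def NonnegV {L : ℕ} (c : Vec L) : Prop := ∀ j, 0 ≤ c j

/-- The consumption space ℝ^L_+ \ {0}. -/
def ConsV {L : ℕ} (c : Vec L) : Prop := NonnegV c ∧ c ≠ 0

/-- Componentwise strictly positive vectors: the set ℝ^L_{++}. -/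
def PosV {L : ℕ} (p : Vec L) : Prop := ∀ j, 0 < p j

/-- Concavity of u on its domain ℝ^L_+. -/
def IsConcaveNN {L : ℕ} (u : Vec L → ℝ) : Prop :=
  ∀ c c' : Vec L, NonnegV c → NonnegV c' → ∀ a : ℝ, 0 ≤ a → a ≤ 1 →
    a * u c + (1 - a) * u c' ≤ u (a • c + (1 - a) • c')

/-- Local nonsatiation of u on its domain ℝ^L_+. -/
def LocallyNonsatiatedNN {L : ℕ} (u : Vec L → ℝ) : Prop :=
  ∀ c : Vec L, NonnegV c → ∀ ε : ℝ, 0 < ε →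
    ∃ c' : Vec L, NonnegV c' ∧ ‖c' - c‖ < ε ∧ u c < u c'

/-- Continuity of u on its domain ℝ^L_+. -/
def ContinuousNN {L : ℕ} (u : Vec L → ℝ) : Prop := ContinuousOn u {c | NonnegV c}

/-- A concave, locally nonsatiated, continuous utility function on ℝ^L_+. -/
def NiceUtility {L : ℕ} (u : Vec L → ℝ) : Prop :=
  IsConcaveNN u ∧ LocallyNonsatiatedNN u ∧ ContinuousNN u

/-- ξ is a supergradient of u at c: u(c') − u(c) ≤ ξᵀ(c'−c) for all c' ∈ ℝ^L_+ \ {0}. -/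
def Supergrad {L : ℕ} (u : Vec L → ℝ) (c ξ : Vec L) : Prop :=
  ∀ c' : Vec L, ConsV c' → u c' - u c ≤ dotp ξ (c' - c)


/-- robustness to local measurement error: with observed prices ρ_t and
consumptions c_t, measurement errors w^p_t and w^c_t, true prices ρ*_t = ρ_t − w^p_t and
true consumptions c*_t = c_t − w^c_t, slackness ε*_{t,s} = ξ_{t,s} − ρ*_tᵀ(c*_t − c*_s),
and α^p = max_t ‖w^p_t‖, α^c = max_t ‖w^c_t‖, β^p = max_t ‖ρ_t‖, β^c = max_t ‖c_t‖
(Euclidean norms): if ε*_{t,s} ≥ 6 max{α^p β^c, α^c β^p, α^p α^c} for all t, s, then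
ξ_{t,s} ≥ ρ_tᵀ(c_t − c_s) for all t, s. -/
theorem stmt_16 {L T : ℕ} (ρ c wp wc : Fin (T + 1) → Vec L)
    (ξ : Fin (T + 1) → Fin (T + 1) → ℝ)
    (hslack : ∀ t s,
        ξ t s - dotp (ρ t - wp t) ((c t - wc t) - (c s - wc s)) ≥
          6 * max (max ((⨆ t', ‖wp t'‖) * (⨆ t', ‖c t'‖)) ((⨆ t', ‖wc t'‖) * (⨆ t', ‖ρ t'‖)))
              ((⨆ t', ‖wp t'‖) * (⨆ t', ‖wc t'‖))) :
    ∀ t s, ξ t s ≥ dotp (ρ t) (c t - c s) := by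
  intro t s
  have hCS : ∀ p q : Vec L, |dotp p q| ≤ ‖p‖ * ‖q‖ := by
    intro p q
    have : dotp p q = inner ℝ p q := by
      simp [dotp, PiLp.inner_apply, RCLike.inner_apply, mul_comm]
    rw [this]
    exact abs_real_inner_le_norm p q
  set Ap := (⨆ t', ‖wp t'‖) with hApdef
  set Ac := (⨆ t', ‖wc t'‖) with hAcdef
  set Bp := (⨆ t', ‖ρ t'‖) with hBpdef
  set Bc := (⨆ t', ‖c t'‖) with hBcdef
  have hAp : ∀ u, ‖wp u‖ ≤ Ap := fun u =>
    le_ciSup (f := fun t' => ‖wp t'‖) (Set.Finite.bddAbove (Set.finite_range _)) u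
  have hAc : ∀ u, ‖wc u‖ ≤ Ac := fun u =>
    le_ciSup (f := fun t' => ‖wc t'‖) (Set.Finite.bddAbove (Set.finite_range _)) u
  have hBp : ∀ u, ‖ρ u‖ ≤ Bp := fun u =>
    le_ciSup (f := fun t' => ‖ρ t'‖) (Set.Finite.bddAbove (Set.finite_range _)) u
  have hBc : ∀ u, ‖c u‖ ≤ Bc := fun u =>
    le_ciSup (f := fun t' => ‖c t'‖) (Set.Finite.bddAbove (Set.finite_range _)) u
  have hb : ∀ (p q : Vec L) (P Q : ℝ), ‖p‖ ≤ P → ‖q‖ ≤ Q →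
      dotp p q ≤ P * Q ∧ -(P * Q) ≤ dotp p q := by
    intro p q P Q hP hQ
    have h1 : |dotp p q| ≤ P * Q := (hCS p q).trans
      (mul_le_mul hP hQ (norm_nonneg _) ((norm_nonneg p).trans hP))
    exact ⟨(le_abs_self _).trans h1, by
      have := (neg_abs_le (dotp p q))
      linarith⟩
  -- expansion identity
  have hexp : dotp (ρ t) (c t - c s) - dotp (ρ t - wp t) ((c t - wc t) - (c s - wc s)) =
      dotp (ρ t) (wc t) - dotp (ρ t) (wc s) + dotp (wp t) (c t) - dotp (wp t) (c s)
        - dotp (wp t) (wc t) + dotp (wp t) (wc s) := by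
    have hdi : ∀ p q : Vec L, dotp p q = inner ℝ p q := by
      intro p q
      simp [dotp, PiLp.inner_apply, RCLike.inner_apply, mul_comm]
    simp only [hdi, inner_sub_left, inner_sub_right]
    ring
  have h1 := hb (ρ t) (wc t) Bp Ac (hBp t) (hAc t)
  have h2 := hb (ρ t) (wc s) Bp Ac (hBp t) (hAc s)
  have h3 := hb (wp t) (c t) Ap Bc (hAp t) (hBc t)
  have h4 := hb (wp t) (c s) Ap Bc (hAp t) (hBc s)
  have h5 := hb (wp t) (wc t) Ap Ac (hAp t) (hAc t)
  have h6 := hb (wp t) (wc s) Ap Ac (hAp t) (hAc s)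
  have hM1 : Ap * Bc ≤ max (max (Ap * Bc) (Ac * Bp)) (Ap * Ac) :=
    le_max_of_le_left (le_max_left _ _)
  have hM2 : Bp * Ac ≤ max (max (Ap * Bc) (Ac * Bp)) (Ap * Ac) := by
    rw [mul_comm]
    exact le_max_of_le_left (le_max_right _ _)
  have hM3 : Ap * Ac ≤ max (max (Ap * Bc) (Ac * Bp)) (Ap * Ac) := le_max_right _ _
  have hs := hslack t s
  linarith [h1.1, h2.2, h3.1, h4.2, h5.2, h6.1]

end
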